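/- For any two sets 𝒯₀, 𝒯₁ of complete first-order theories in a fixed language, the E-closure of their union equals the union of their E-closures: Cl_E(𝒯₀ ∪ 𝒯₁) = Cl_E(𝒯₀) ∪ Cl_E(𝒯₁). -/

import Mathlib

open FirstOrder FirstOrder.Language

/-- The E-closure of a family of theories: the family itself together with all
maximal (complete) theories each of whose sentences belongs to infinitely many
members of the family (Proposition 2.2 of the paper). -/
def ClE {L : Language} (𝒯 : Set L.Theory) : Set L.Theory :=
  𝒯 ∪ {T | T.IsMaximal ∧ ∀ φ ∈ T, {T' ∈ 𝒯 | φ ∈ T'}.Infinite}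

lemma mem_of_inf_mem {L : Language} {T : L.Theory} (h : T.IsMaximal)
    {φ ψ : L.Sentence} (hmem : φ ⊓ ψ ∈ T) : φ ∈ T ∧ ψ ∈ T := by
  constructor <;> apply h.mem_of_models <;>
    rw [Theory.models_sentence_iff] <;> intro M <;>
    have := M.is_model.realize_of_mem _ hmem <;>
    simp only [Sentence.Realize, Formula.realize_inf] at this
  · exact this.1
  · exact this.2

lemma inf_mem {L : Language} {T : L.Theory} (h : T.IsMaximal)
    {φ ψ : L.Sentence} (hφ : φ ∈ T) (hψ : ψ ∈ T) : φ ⊓ ψ ∈ T := by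
  apply h.mem_of_models
  rw [Theory.models_sentence_iff]
  intro M
  have h1 := M.is_model.realize_of_mem _ hφ
  have h2 := M.is_model.realize_of_mem _ hψ
  simp only [Sentence.Realize, Formula.realize_inf]
  exact ⟨h1, h2⟩

/-- Theorem 2.3: the E-closure of a union is the union of the E-closures. -/
theorem ClE_union {L : Language} (𝒯₀ 𝒯₁ : Set L.Theory)
    (h₀ : ∀ T ∈ 𝒯₀, T.IsMaximal) (h₁ : ∀ T ∈ 𝒯₁, T.IsMaximal) :
    ClE (𝒯₀ ∪ 𝒯₁) = ClE 𝒯₀ ∪ ClE 𝒯₁ := by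
  ext T
  constructor
  · rintro (hmem | ⟨hmax, hinf⟩)
    · rcases hmem with h | h
      · exact Or.inl (Or.inl h)
      · exact Or.inr (Or.inl h)
    · by_contra hcon
      simp only [ClE, Set.mem_union, Set.mem_setOf_eq, not_or] at hcon
      obtain ⟨⟨hm0, n0'⟩, hm1, n1'⟩ := hcon
      have n0 : ¬ (T.IsMaximal ∧ ∀ φ ∈ T, {T' ∈ 𝒯₀ | φ ∈ T'}.Infinite) := n0'
      have n1 : ¬ (T.IsMaximal ∧ ∀ φ ∈ T, {T' ∈ 𝒯₁ | φ ∈ T'}.Infinite) := n1'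
      rw [not_and] at n0 n1
      obtain ⟨φ₀, hφ₀T, hφ₀fin⟩ := by
        have := n0 hmax; push_neg at this; exact this
      obtain ⟨φ₁, hφ₁T, hφ₁fin⟩ := by
        have := n1 hmax; push_neg at this; exact this
      have hinfmem : φ₀ ⊓ φ₁ ∈ T := inf_mem hmax hφ₀T hφ₁T
      have hbig := hinf _ hinfmem
      apply hbig
      apply Set.Finite.subset (hφ₀fin.union hφ₁fin)
      rintro T' ⟨hT' | hT', hmemT'⟩
      · exact Or.inl ⟨hT', (mem_of_inf_mem (h₀ T' hT') hmemT').1⟩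
      · exact Or.inr ⟨hT', (mem_of_inf_mem (h₁ T' hT') hmemT').2⟩
  · rintro ((h | ⟨hmax, hinf⟩) | (h | ⟨hmax, hinf⟩))
    · exact Or.inl (Or.inl h)
    · exact Or.inr ⟨hmax, fun φ hφ => (hinf φ hφ).mono (fun T' hT' => ⟨Or.inl hT'.1, hT'.2⟩)⟩
    · exact Or.inl (Or.inr h)
    · exact Or.inr ⟨hmax, fun φ hφ => (hinf φ hφ).mono (fun T' hT' => ⟨Or.inr hT'.1, hT'.2⟩)⟩
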